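/- Let c_n := (4n−1)!!/(24ⁿ n!), the n-th coefficient of the partition function of zero-dimensional φ⁴-theory. Then for every R ∈ ℕ, c_n − (1/(√2 · π)) · Σ_{k=0}^{R−1} (−1)^k c_k (2/3)^{n−k} Γ(n−k) = O( (2/3)ⁿ Γ(n−R) ) as n → ∞. (The two symmetric dominant saddle points of the action −x²/2 + x⁴/4! at x = ±√6, both with value −3/2, contribute equally, producing the prefactor 1/(√2 π).) -/

import Mathlib

open Real Filter Finset Set

/-- `c_n = (4n-1)!!/(24^n n!)`, the `n`-th coefficient of the partition function of
zero-dimensional φ⁴-theory, with `(4n-1)!! = (4n)!/(2^{2n}(2n)!)`. -/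
noncomputable def cphi4 (n : ℕ) : ℝ :=
  ((4 * n).factorial : ℝ) / (2 ^ (2 * n) * ((2 * n).factorial : ℝ)) /
    (24 ^ n * (n.factorial : ℝ))

namespace Stmt8Aux

lemma cphi4_pos (n : ℕ) : 0 < cphi4 n := by
  unfold cphi4
  positivity

lemma cphi4_succ (n : ℕ) :
    cphi4 (n + 1) = cphi4 n * ((4 * n + 1) * (4 * n + 3)) / (24 * (n + 1)) := by
  have e4 : ((4 * (n + 1)).factorial : ℝ)
      = (4*n+4) * ((4*n+3) * ((4*n+2) * ((4*n+1) * ((4*n).factorial : ℝ)))) := by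
    have h : 4 * (n + 1) = (4*n + 3) + 1 := by ring
    rw [h, Nat.factorial_succ]
    have h3 : 4*n + 3 = (4*n + 2) + 1 := by ring
    rw [h3, Nat.factorial_succ]
    have h2 : 4*n + 2 = (4*n + 1) + 1 := by ring
    rw [h2, Nat.factorial_succ]
    rw [Nat.factorial_succ]
    push_cast
    ring
  have e2 : ((2 * (n + 1)).factorial : ℝ)
      = (2*n+2) * ((2*n+1) * ((2*n).factorial : ℝ)) := by
    have h : 2 * (n + 1) = (2*n + 1) + 1 := by ring
    rw [h, Nat.factorial_succ, Nat.factorial_succ]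
    push_cast
    ring
  have e1 : (((n+1)).factorial : ℝ) = (n+1) * (n.factorial : ℝ) := by
    rw [Nat.factorial_succ]; push_cast; ring
  have hp2 : (2:ℝ) ^ (2 * (n+1)) = 4 * 2 ^ (2*n) := by
    rw [show 2*(n+1) = 2*n + 2 by ring, pow_add]; ring
  have hp24 : (24:ℝ) ^ (n+1) = 24 * 24 ^ n := by rw [pow_succ]; ring
  unfold cphi4
  rw [e4, e2, e1, hp2, hp24]
  have h1 : ((2:ℝ) ^ (2*n)) ≠ 0 := by positivity
  have h2 : (((2*n).factorial : ℝ)) ≠ 0 := by positivity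
  have h3 : ((24:ℝ) ^ n) ≠ 0 := by positivity
  have h4 : ((n.factorial : ℝ)) ≠ 0 := by positivity
  have h5 : ((n:ℝ) + 1) ≠ 0 := by positivity
  have h6 : (2*(n:ℝ)+1) ≠ 0 := by positivity
  have h7 : (2*(n:ℝ)+2) ≠ 0 := by positivity
  field_simp
  ring

noncomputable def bb (k : ℕ) : ℝ := (3/2) ^ k * cphi4 k

lemma bb_pos (k : ℕ) : 0 < bb k := by
  have := cphi4_pos k
  unfold bb; positivity

lemma bb_zero : bb 0 = 1 := by
  simp [bb, cphi4]

lemma bb_succ (k : ℕ) : 16 * ((k:ℝ) + 1) * bb (k + 1) = (4*k+1) * (4*k+3) * bb k := by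
  unfold bb
  rw [cphi4_succ]
  have h5 : ((k:ℝ) + 1) ≠ 0 := by positivity
  field_simp
  ring


lemma cphi4_succ' (n : ℕ) :
    cphi4 (n + 1) * (24 * ((n:ℝ) + 1)) = cphi4 n * ((4 * n + 1) * (4 * n + 3)) := by
  rw [cphi4_succ]
  have h5 : ((n:ℝ) + 1) ≠ 0 := by positivity
  field_simp

/-- relation between `cphi4` and Gamma values. -/
lemma key : ∀ n : ℕ, 1 ≤ n →
    Real.Gamma ((n:ℝ) + 1/4) * Real.Gamma ((n:ℝ) + 3/4)
      = Real.sqrt 2 * π * (3/2) ^ n * cphi4 n * Real.Gamma ((n:ℝ) + 1) := by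
  intro n hn
  induction n, hn using Nat.le_induction with
  | base =>
    push_cast
    have hrefl := Real.Gamma_mul_Gamma_one_sub (1/4)
    rw [show (1:ℝ) - 1/4 = 3/4 by norm_num] at hrefl
    have hs : Real.sin (π * (1/4)) = Real.sqrt 2 / 2 := by
      rw [show π * (1/4) = π / 4 by ring, Real.sin_pi_div_four]
    rw [hs] at hrefl
    have h14 : Real.Gamma ((1:ℝ) + 1/4) = (1/4) * Real.Gamma (1/4) := by
      rw [show (1:ℝ) + 1/4 = 1/4 + 1 by ring, Real.Gamma_add_one (by norm_num)]
    have h34 : Real.Gamma ((1:ℝ) + 3/4) = (3/4) * Real.Gamma (3/4) := by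
      rw [show (1:ℝ) + 3/4 = 3/4 + 1 by ring, Real.Gamma_add_one (by norm_num)]
    have h2 : Real.Gamma ((1:ℝ) + 1) = 1 := by
      rw [show (1:ℝ) + 1 = 2 by norm_num, Real.Gamma_two]
    have hc1 : cphi4 1 = 1/8 := by
      norm_num [cphi4, Nat.factorial]
    have hsq : Real.sqrt 2 ≠ 0 := by positivity
    have h2' : Real.sqrt 2 * Real.sqrt 2 = 2 := Real.mul_self_sqrt (by norm_num)
    have hgg : Real.Gamma (1/4) * Real.Gamma (3/4) = Real.sqrt 2 * π := by
      rw [hrefl, div_eq_iff (by positivity : (Real.sqrt 2 / 2 : ℝ) ≠ 0)]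
      nlinarith [h2', Real.pi_pos]
    rw [h14, h34, h2, hc1]
    linear_combination (3/16) * hgg
  | succ n hn ih =>
    push_cast
    have h14 : Real.Gamma ((n:ℝ) + 1 + 1/4) = ((n:ℝ) + 1/4) * Real.Gamma ((n:ℝ) + 1/4) := by
      rw [show (n:ℝ) + 1 + 1/4 = ((n:ℝ) + 1/4) + 1 by ring,
        Real.Gamma_add_one (by positivity)]
    have h34 : Real.Gamma ((n:ℝ) + 1 + 3/4) = ((n:ℝ) + 3/4) * Real.Gamma ((n:ℝ) + 3/4) := by
      rw [show (n:ℝ) + 1 + 3/4 = ((n:ℝ) + 3/4) + 1 by ring,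
        Real.Gamma_add_one (by positivity)]
    have h2 : Real.Gamma ((n:ℝ) + 1 + 1) = ((n:ℝ) + 1) * Real.Gamma ((n:ℝ) + 1) :=
      Real.Gamma_add_one (by positivity)
    have hc := cphi4_succ' n
    rw [h14, h34, h2]
    linear_combination (((n:ℝ) + 1/4) * ((n:ℝ) + 3/4)) * ih
      - (Real.sqrt 2 * π * (3/2) ^ n * Real.Gamma ((n:ℝ) + 1) / 16) * hc


noncomputable def Sp (R n : ℕ) : ℝ :=
  ∑ k ∈ Finset.range R, (-1:ℝ) ^ k * bb k * Real.Gamma ((n:ℝ) - k)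

lemma Sp_succ (R n : ℕ) :
    Sp (R+1) n = Sp R n + (-1:ℝ)^R * bb R * Real.Gamma ((n:ℝ) - R) :=
  Finset.sum_range_succ _ _

lemma star (R : ℕ) : ∀ n : ℕ, R + 1 ≤ n →
    16 * ((n:ℝ) + 1) * Sp R (n+1)
      = (4*n+1) * (4*n+3) * Sp R n
        + (-1:ℝ)^R * (16*R) * bb R * Real.Gamma ((n:ℝ) - R + 1) := by
  induction R with
  | zero => intro n hn; simp [Sp]
  | succ R ih =>
    intro n hn
    have hn' : R + 1 ≤ n := le_trans (Nat.le_succ _) hn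
    have hIH := ih n hn'
    have hnR : (1:ℝ) ≤ (n:ℝ) - R := by
      have : (R:ℝ) + 1 ≤ (n:ℝ) := by exact_mod_cast hn'
      linarith
    have hG : Real.Gamma ((n:ℝ) - R + 1) = ((n:ℝ) - R) * Real.Gamma ((n:ℝ) - R) :=
      Real.Gamma_add_one (by linarith)
    have hb := bb_succ R
    rw [Sp_succ, Sp_succ]
    have hc1 : ((n+1:ℕ):ℝ) - (R:ℝ) = (n:ℝ) - R + 1 := by push_cast; ring
    rw [hc1]
    have hc2 : (n:ℝ) - ((R+1:ℕ):ℝ) + 1 = (n:ℝ) - R := by push_cast; ring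
    rw [hc2]
    push_cast
    linear_combination hIH + ((-1:ℝ)^R * bb R * (16*(n:ℝ) + 16 + 16*R)) * hG
      + ((-1:ℝ)^R * Real.Gamma ((n:ℝ) - R)) * hb

lemma logGamma_combo {x y : ℝ} (hx : 0 < x) (hy : 0 < y) {a c : ℝ}
    (ha : 0 ≤ a) (hc : 0 ≤ c) (hac : a + c = 1) :
    Real.log (Real.Gamma (a*x + c*y)) ≤ a * Real.log (Real.Gamma x) + c * Real.log (Real.Gamma y) := by
  have h := Real.convexOn_log_Gamma.2 (mem_Ioi.2 hx) (mem_Ioi.2 hy) ha hc hac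
  simpa using h

/-- Gautschi-type upper bound: `Γ(x+1/4)Γ(x+3/4) ≤ Γ(x)Γ(x+1)`. -/
lemma F_le_one {x : ℝ} (hx : 0 < x) :
    Real.Gamma (x + 1/4) * Real.Gamma (x + 3/4) ≤ Real.Gamma x * Real.Gamma (x + 1) := by
  have hx1 : 0 < x + 1 := by linarith
  have h1 := logGamma_combo hx hx1 (by norm_num : (0:ℝ) ≤ 3/4) (by norm_num : (0:ℝ) ≤ 1/4) (by norm_num)
  have h2 := logGamma_combo hx hx1 (by norm_num : (0:ℝ) ≤ 1/4) (by norm_num : (0:ℝ) ≤ 3/4) (by norm_num)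
  rw [show (3/4:ℝ)*x + (1/4)*(x+1) = x + 1/4 by ring] at h1
  rw [show (1/4:ℝ)*x + (3/4)*(x+1) = x + 3/4 by ring] at h2
  have hsum : Real.log (Real.Gamma (x+1/4)) + Real.log (Real.Gamma (x+3/4))
      ≤ Real.log (Real.Gamma x) + Real.log (Real.Gamma (x+1)) := by linarith
  have e := Real.exp_le_exp.2 hsum
  rwa [Real.exp_add, Real.exp_add,
    Real.exp_log (Real.Gamma_pos_of_pos (by linarith)),
    Real.exp_log (Real.Gamma_pos_of_pos (by linarith)),
    Real.exp_log (Real.Gamma_pos_of_pos hx),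
    Real.exp_log (Real.Gamma_pos_of_pos hx1)] at e

/-- lower bound (squared form): `(Γ(x)Γ(x+1))² ≤ (Γ(x+1/4)Γ(x+3/4))²(x+1/4)(x+3/4)/x²`. -/
lemma F_lower {x : ℝ} (hx : 0 < x) :
    (Real.Gamma x * Real.Gamma (x + 1))^2 * (x*x)
      ≤ (Real.Gamma (x + 1/4) * Real.Gamma (x + 3/4))^2 * ((x+1/4)*(x+3/4)) := by
  have p14 : (0:ℝ) < x + 1/4 := by linarith
  have p34 : (0:ℝ) < x + 3/4 := by linarith
  have p54 : (0:ℝ) < x + 5/4 := by linarith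
  have p74 : (0:ℝ) < x + 7/4 := by linarith
  have h1 := logGamma_combo p14 p74 (by norm_num : (0:ℝ) ≤ 1/2) (by norm_num : (0:ℝ) ≤ 1/2) (by norm_num)
  have h2 := logGamma_combo p34 p54 (by norm_num : (0:ℝ) ≤ 1/2) (by norm_num : (0:ℝ) ≤ 1/2) (by norm_num)
  rw [show (1/2:ℝ)*(x+1/4) + (1/2)*(x+7/4) = x + 1 by ring] at h1
  rw [show (1/2:ℝ)*(x+3/4) + (1/2)*(x+5/4) = x + 1 by ring] at h2
  have e74 : Real.Gamma (x + 7/4) = (x + 3/4) * Real.Gamma (x + 3/4) := by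
    rw [show x + 7/4 = (x + 3/4) + 1 by ring, Real.Gamma_add_one (ne_of_gt p34)]
  have e54 : Real.Gamma (x + 5/4) = (x + 1/4) * Real.Gamma (x + 1/4) := by
    rw [show x + 5/4 = (x + 1/4) + 1 by ring, Real.Gamma_add_one (ne_of_gt p14)]
  have eX : Real.Gamma (x + 1) = x * Real.Gamma x := Real.Gamma_add_one (ne_of_gt hx)
  have g14 := Real.Gamma_pos_of_pos p14
  have g34 := Real.Gamma_pos_of_pos p34
  have gx := Real.Gamma_pos_of_pos hx
  have gx1 := Real.Gamma_pos_of_pos (by linarith : (0:ℝ) < x + 1)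
  rw [e74, Real.log_mul (ne_of_gt p34) (ne_of_gt g34)] at h1
  rw [e54, Real.log_mul (ne_of_gt p14) (ne_of_gt g14)] at h2
  -- 2 log Γ(x+1) ≤ log Γ(x+1/4) + log Γ(x+3/4) + (1/2) log(x+1/4) + (1/2) log(x+3/4)
  -- log Γx + log Γ(x+1) = 2 log Γ(x+1) - log x
  have exlog : Real.log (Real.Gamma (x+1)) = Real.log x + Real.log (Real.Gamma x) := by
    rw [eX, Real.log_mul (ne_of_gt hx) (ne_of_gt gx)]
  have hsum : 2 * (Real.log (Real.Gamma x) + Real.log (Real.Gamma (x+1))) + 2 * Real.log x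
      ≤ 2 * (Real.log (Real.Gamma (x+1/4)) + Real.log (Real.Gamma (x+3/4)))
        + (Real.log (x+1/4) + Real.log (x+3/4)) := by linarith
  have e := Real.exp_le_exp.2 hsum
  have expand : ∀ (A B : ℝ), 0 < A → 0 < B →
      Real.exp (2 * (Real.log A) + 2 * Real.log B) = A^2 * B^2 := by
    intro A B hA hB
    rw [Real.exp_add, show (2:ℝ) * Real.log A = Real.log A + Real.log A by ring,
      show (2:ℝ) * Real.log B = Real.log B + Real.log B by ring,
      Real.exp_add, Real.exp_add, Real.exp_log hA, Real.exp_log hB]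
    ring
  have eL : Real.exp (2 * (Real.log (Real.Gamma x) + Real.log (Real.Gamma (x+1))) + 2 * Real.log x)
      = (Real.Gamma x * Real.Gamma (x+1))^2 * (x*x) := by
    rw [show 2 * (Real.log (Real.Gamma x) + Real.log (Real.Gamma (x+1)))
        = 2 * Real.log (Real.Gamma x * Real.Gamma (x+1)) by
          rw [Real.log_mul (ne_of_gt gx) (ne_of_gt gx1)],
      expand _ _ (by positivity) hx]
    ring
  have eR : Real.exp (2 * (Real.log (Real.Gamma (x+1/4)) + Real.log (Real.Gamma (x+3/4)))
        + (Real.log (x+1/4) + Real.log (x+3/4)))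
      = (Real.Gamma (x+1/4) * Real.Gamma (x+3/4))^2 * ((x+1/4)*(x+3/4)) := by
    rw [show 2 * (Real.log (Real.Gamma (x+1/4)) + Real.log (Real.Gamma (x+3/4)))
        = 2 * Real.log (Real.Gamma (x+1/4) * Real.Gamma (x+3/4)) by
          rw [Real.log_mul (ne_of_gt g14) (ne_of_gt g34)],
      show Real.log (x+1/4) + Real.log (x+3/4) = Real.log ((x+1/4)*(x+3/4)) by
          rw [Real.log_mul (ne_of_gt p14) (ne_of_gt p34)],
      Real.exp_add, Real.exp_log (by positivity : (0:ℝ) < (x+1/4)*(x+3/4))]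
    rw [show (2:ℝ) * Real.log (Real.Gamma (x+1/4) * Real.Gamma (x+3/4))
        = Real.log (Real.Gamma (x+1/4) * Real.Gamma (x+3/4))
          + Real.log (Real.Gamma (x+1/4) * Real.Gamma (x+3/4)) by ring,
      Real.exp_add, Real.exp_log (by positivity)]
    ring
  rw [eL, eR] at e
  exact e


noncomputable def Q (N : ℕ) : ℝ :=
  Real.Gamma (N:ℝ) * Real.Gamma ((N:ℝ) + 1) /
    (Real.Gamma ((N:ℝ) + 1/4) * Real.Gamma ((N:ℝ) + 3/4))

lemma tendsto_Q : Tendsto Q atTop (nhds 1) := by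
  have hw : Tendsto (fun N : ℕ => (1 + (1/4) * (1/(N:ℝ))) * (1 + (3/4) * (1/(N:ℝ))))
      atTop (nhds 1) := by
    have h0 : Tendsto (fun N : ℕ => 1/(N:ℝ)) atTop (nhds 0) :=
      tendsto_one_div_atTop_nhds_zero_nat
    have := ((tendsto_const_nhds (x := (1:ℝ))).add (h0.const_mul (1/4))).mul
      ((tendsto_const_nhds (x := (1:ℝ))).add (h0.const_mul (3/4)))
    simpa using this
  refine tendsto_of_tendsto_of_tendsto_of_le_of_le' tendsto_const_nhds hw ?_ ?_
  · filter_upwards [eventually_ge_atTop 1] with N hN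
    have hNpos : (0:ℝ) < (N:ℝ) := by exact_mod_cast hN
    have hA : 0 < Real.Gamma ((N:ℝ) + 1/4) * Real.Gamma ((N:ℝ) + 3/4) := by
      have := Real.Gamma_pos_of_pos (by linarith : (0:ℝ) < (N:ℝ) + 1/4)
      have := Real.Gamma_pos_of_pos (by linarith : (0:ℝ) < (N:ℝ) + 3/4)
      positivity
    rw [Q, le_div_iff₀ hA, one_mul]
    exact F_le_one hNpos
  · filter_upwards [eventually_ge_atTop 1] with N hN
    have hNpos : (0:ℝ) < (N:ℝ) := by exact_mod_cast hN
    have hA : 0 < Real.Gamma ((N:ℝ) + 1/4) * Real.Gamma ((N:ℝ) + 3/4) := by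
      have := Real.Gamma_pos_of_pos (by linarith : (0:ℝ) < (N:ℝ) + 1/4)
      have := Real.Gamma_pos_of_pos (by linarith : (0:ℝ) < (N:ℝ) + 3/4)
      positivity
    have hG : 0 < Real.Gamma (N:ℝ) * Real.Gamma ((N:ℝ) + 1) := by
      have := Real.Gamma_pos_of_pos hNpos
      have := Real.Gamma_pos_of_pos (by linarith : (0:ℝ) < (N:ℝ) + 1)
      positivity
    have hQ1 : 1 ≤ Q N := by
      rw [Q, le_div_iff₀ hA, one_mul]; exact F_le_one hNpos
    have hQsq : Q N * Q N ≤ (1 + (1/4) * (1/(N:ℝ))) * (1 + (3/4) * (1/(N:ℝ))) := by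
      have hlow := F_lower hNpos
      have : Q N * Q N = (Real.Gamma (N:ℝ) * Real.Gamma ((N:ℝ)+1))^2 /
          (Real.Gamma ((N:ℝ)+1/4) * Real.Gamma ((N:ℝ)+3/4))^2 := by
        rw [Q, div_mul_div_comm]; ring_nf
      rw [this, div_le_iff₀ (by positivity)]
      have hrw : (1 + (1/4) * (1/(N:ℝ))) * (1 + (3/4) * (1/(N:ℝ)))
          = (((N:ℝ)+1/4) * ((N:ℝ)+3/4)) / ((N:ℝ) * (N:ℝ)) := by
        field_simp
      rw [hrw, div_mul_eq_mul_div, le_div_iff₀ (by positivity)]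
      nlinarith [hlow]
    calc Q N ≤ Q N * Q N := le_mul_of_one_le_left (by linarith) hQ1
      _ ≤ _ := hQsq

lemma tendsto_T : ∀ k : ℕ,
    Tendsto (fun N : ℕ => Real.Gamma ((N:ℝ) - ((k:ℝ) + 1)) / Real.Gamma (N:ℝ))
      atTop (nhds 0) := by
  intro k
  induction k with
  | zero =>
    have hsub : Tendsto (fun N:ℕ => (N:ℝ) - 1) atTop atTop := by
      have := tendsto_atTop_add_const_right atTop (-(1:ℝ)) tendsto_natCast_atTop_atTop
      simpa [sub_eq_add_neg] using this
    have hlim := Tendsto.comp tendsto_inv_atTop_zero hsub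
    apply hlim.congr'
    filter_upwards [eventually_ge_atTop 2] with N hN
    have h1 : (1:ℝ) ≤ (N:ℝ) - 1 := by
      have : (2:ℝ) ≤ (N:ℝ) := by exact_mod_cast hN
      linarith
    have hg : 0 < Real.Gamma ((N:ℝ) - 1) := Real.Gamma_pos_of_pos (by linarith)
    have hGam : Real.Gamma (N:ℝ) = ((N:ℝ) - 1) * Real.Gamma ((N:ℝ) - 1) := by
      conv_lhs => rw [show (N:ℝ) = ((N:ℝ) - 1) + 1 by ring]
      rw [Real.Gamma_add_one (by linarith : ((N:ℝ) - 1) ≠ 0)]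
    rw [show (N:ℝ) - (((0:ℕ):ℝ) + 1) = (N:ℝ) - 1 by push_cast; ring, hGam]
    have hne : ((N:ℝ) - 1) ≠ 0 := by linarith
    field_simp
    simp only [Function.comp_apply]
    exact one_div_mul_cancel hne
  | succ k ih =>
    have hsub : Tendsto (fun N:ℕ => (N:ℝ) - ((k:ℝ)+2)) atTop atTop := by
      have := tendsto_atTop_add_const_right atTop (-((k:ℝ)+2)) tendsto_natCast_atTop_atTop
      simpa [sub_eq_add_neg] using this
    have hlim2 := Tendsto.comp tendsto_inv_atTop_zero hsub
    have hmul : Tendsto (fun N : ℕ =>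
        (Real.Gamma ((N:ℝ) - ((k:ℝ) + 1)) / Real.Gamma (N:ℝ)) * ((N:ℝ) - ((k:ℝ)+2))⁻¹)
        atTop (nhds 0) := by
      simpa using ih.mul hlim2
    apply hmul.congr'
    filter_upwards [eventually_ge_atTop (k+3)] with N hN
    have h2 : (1:ℝ) ≤ (N:ℝ) - ((k:ℝ)+2) := by
      have : ((k:ℝ)+3) ≤ (N:ℝ) := by exact_mod_cast hN
      linarith
    have hg : 0 < Real.Gamma ((N:ℝ) - ((k:ℝ)+2)) := Real.Gamma_pos_of_pos (by linarith)
    have hgN : 0 < Real.Gamma (N:ℝ) := Real.Gamma_pos_of_pos (by linarith)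
    have hGam : Real.Gamma ((N:ℝ) - ((k:ℝ)+1))
        = ((N:ℝ) - ((k:ℝ)+2)) * Real.Gamma ((N:ℝ) - ((k:ℝ)+2)) := by
      conv_lhs => rw [show (N:ℝ) - ((k:ℝ)+1) = ((N:ℝ) - ((k:ℝ)+2)) + 1 by ring]
      rw [Real.Gamma_add_one (by linarith : ((N:ℝ) - ((k:ℝ)+2)) ≠ 0)]
    rw [show (N:ℝ) - (((k+1:ℕ):ℝ) + 1) = (N:ℝ) - ((k:ℝ)+2) by push_cast; ring, hGam]
    have hne : ((N:ℝ) - ((k:ℝ)+2)) ≠ 0 := by linarith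
    field_simp

lemma tendsto_Sp_div (R : ℕ) (hR : 1 ≤ R) :
    Tendsto (fun N : ℕ => Sp R N / Real.Gamma (N:ℝ)) atTop (nhds 1) := by
  have hsum : Tendsto (fun N : ℕ => ∑ k ∈ Finset.range R,
      (-1:ℝ)^k * bb k * (Real.Gamma ((N:ℝ) - k) / Real.Gamma (N:ℝ))) atTop
      (nhds (∑ k ∈ Finset.range R, if k = 0 then 1 else 0)) := by
    apply tendsto_finset_sum
    intro k hk
    rcases Nat.eq_zero_or_pos k with rfl | hkpos
    · simp only [if_pos rfl]
      have : Tendsto (fun N : ℕ => (1:ℝ)) atTop (nhds 1) := tendsto_const_nhds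
      apply this.congr'
      filter_upwards [eventually_ge_atTop 1] with N hN
      have hgN : 0 < Real.Gamma (N:ℝ) := Real.Gamma_pos_of_pos (by
        have : (1:ℝ) ≤ (N:ℝ) := by exact_mod_cast hN
        linarith)
      rw [show ((N:ℝ) - ((0:ℕ):ℝ)) = (N:ℝ) by push_cast; ring]
      rw [bb_zero]
      field_simp
    · rw [if_neg (Nat.pos_iff_ne_zero.mp hkpos)]
      obtain ⟨j, rfl⟩ := Nat.exists_eq_add_of_le hkpos
      have hT := tendsto_T j
      have : Tendsto (fun N : ℕ => (-1:ℝ)^(1+j) * bb (1+j) *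
          (Real.Gamma ((N:ℝ) - ((j:ℝ)+1)) / Real.Gamma (N:ℝ))) atTop (nhds 0) := by
        simpa using hT.const_mul ((-1:ℝ)^(1+j) * bb (1+j))
      apply this.congr
      intro N
      rw [show (N:ℝ) - ((1+j:ℕ):ℝ) = (N:ℝ) - ((j:ℝ)+1) by push_cast; ring]
  have hone : (∑ k ∈ Finset.range R, if k = 0 then (1:ℝ) else 0) = 1 := by
    have h0 : 0 ∈ Finset.range R := Finset.mem_range.mpr hR
    rw [Finset.sum_ite_eq' (Finset.range R) 0 (fun _ => (1:ℝ))]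
    simp [h0]
  rw [hone] at hsum
  apply hsum.congr
  intro N
  rw [Sp, Finset.sum_div]
  congr 1
  ext k
  ring


noncomputable def phi (R n : ℕ) : ℝ :=
  1 - Sp R n * Real.Gamma ((n:ℝ)+1) / (Real.Gamma ((n:ℝ)+1/4) * Real.Gamma ((n:ℝ)+3/4))

noncomputable def uu (R n : ℕ) : ℝ :=
  Real.Gamma ((n:ℝ) - R + 1) / Real.Gamma ((n:ℝ)+1)

lemma gamma_pos_nat_add (n : ℕ) (c : ℝ) (hc : 0 < c) : 0 < Real.Gamma ((n:ℝ) + c) :=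
  Real.Gamma_pos_of_pos (by positivity)

lemma delta_phi (R n : ℕ) (hn : R + 1 ≤ n) :
    phi R (n+1) - phi R n
      = -((-1:ℝ)^R * R * bb R * Real.Gamma ((n:ℝ) - R + 1) * Real.Gamma ((n:ℝ)+1)
          / (Real.Gamma (((n:ℝ)+1)+1/4) * Real.Gamma (((n:ℝ)+1)+3/4))) := by
  have h14 : Real.Gamma (((n:ℝ)+1) + 1/4) = ((n:ℝ) + 1/4) * Real.Gamma ((n:ℝ) + 1/4) := by
    rw [show (n:ℝ) + 1 + 1/4 = ((n:ℝ) + 1/4) + 1 by ring,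
      Real.Gamma_add_one (by positivity)]
  have h34 : Real.Gamma (((n:ℝ)+1) + 3/4) = ((n:ℝ) + 3/4) * Real.Gamma ((n:ℝ) + 3/4) := by
    rw [show (n:ℝ) + 1 + 3/4 = ((n:ℝ) + 3/4) + 1 by ring,
      Real.Gamma_add_one (by positivity)]
  have h2 : Real.Gamma (((n:ℝ)+1) + 1) = ((n:ℝ) + 1) * Real.Gamma ((n:ℝ) + 1) :=
    Real.Gamma_add_one (by positivity)
  have hstar := star R n hn
  have ga := gamma_pos_nat_add n (1/4) (by norm_num)
  have gc := gamma_pos_nat_add n (3/4) (by norm_num)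
  have g1 := gamma_pos_nat_add n 1 (by norm_num)
  unfold phi
  push_cast
  rw [h14, h34, h2]
  set A := Real.Gamma ((n:ℝ)+1/4) with hA
  set Cc := Real.Gamma ((n:ℝ)+3/4) with hC
  set G := Real.Gamma ((n:ℝ)+1) with hG
  set E := Real.Gamma ((n:ℝ) - R + 1) with hEE
  set s := Sp R n with hs
  set s' := Sp R (n+1) with hs'
  have hane : A ≠ 0 := ne_of_gt ga
  have hcne : Cc ≠ 0 := ne_of_gt gc
  have h14ne : ((n:ℝ)+1/4) ≠ 0 := by positivity
  have h34ne : ((n:ℝ)+3/4) ≠ 0 := by positivity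
  field_simp
  linear_combination (-G) * hstar

lemma F1_le (m : ℕ) (hm : 1 ≤ m) :
    Real.Gamma (5/4) * Real.Gamma (7/4) * (Real.Gamma (m:ℝ) * Real.Gamma ((m:ℝ)+1))
      ≤ Real.Gamma ((m:ℝ)+1/4) * Real.Gamma ((m:ℝ)+3/4) := by
  induction m, hm using Nat.le_induction with
  | base =>
    push_cast
    rw [show ((1:ℝ)+1/4) = 5/4 by norm_num, show ((1:ℝ)+3/4) = 7/4 by norm_num,
      Real.Gamma_one, show ((1:ℝ)+1) = 2 by norm_num, Real.Gamma_two]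
    ring_nf
    exact le_refl _
  | succ m hm ih =>
    push_cast
    have hmpos : (0:ℝ) < (m:ℝ) := by exact_mod_cast hm
    have h14 : Real.Gamma (((m:ℝ)+1) + 1/4) = ((m:ℝ) + 1/4) * Real.Gamma ((m:ℝ) + 1/4) := by
      rw [show (m:ℝ) + 1 + 1/4 = ((m:ℝ) + 1/4) + 1 by ring,
        Real.Gamma_add_one (by positivity)]
    have h34 : Real.Gamma (((m:ℝ)+1) + 3/4) = ((m:ℝ) + 3/4) * Real.Gamma ((m:ℝ) + 3/4) := by
      rw [show (m:ℝ) + 1 + 3/4 = ((m:ℝ) + 3/4) + 1 by ring,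
        Real.Gamma_add_one (by positivity)]
    have h2 : Real.Gamma (((m:ℝ)+1) + 1) = ((m:ℝ) + 1) * Real.Gamma ((m:ℝ) + 1) :=
      Real.Gamma_add_one (by positivity)
    have h1 : Real.Gamma ((m:ℝ)+1) = (m:ℝ) * Real.Gamma (m:ℝ) :=
      Real.Gamma_add_one (ne_of_gt hmpos)
    rw [h14, h34, h2]
    have ga := gamma_pos_nat_add m (1/4) (by norm_num)
    have gc := gamma_pos_nat_add m (3/4) (by norm_num)
    have g1 := gamma_pos_nat_add m 1 (by norm_num)
    have g5 : 0 < Real.Gamma (5/4) := Real.Gamma_pos_of_pos (by norm_num)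
    have g7 : 0 < Real.Gamma (7/4) := Real.Gamma_pos_of_pos (by norm_num)
    have gm : 0 < Real.Gamma (m:ℝ) := Real.Gamma_pos_of_pos hmpos
    have step1 : Real.Gamma (5/4) * Real.Gamma (7/4)
        * (Real.Gamma ((m:ℝ)+1) * (((m:ℝ)+1) * Real.Gamma ((m:ℝ)+1)))
        = (m:ℝ) * ((m:ℝ)+1)
          * (Real.Gamma (5/4) * Real.Gamma (7/4) * (Real.Gamma (m:ℝ) * Real.Gamma ((m:ℝ)+1))) := by
      rw [h1]; ring
    have step2 : (m:ℝ) * ((m:ℝ)+1)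
          * (Real.Gamma (5/4) * Real.Gamma (7/4) * (Real.Gamma (m:ℝ) * Real.Gamma ((m:ℝ)+1)))
        ≤ (m:ℝ) * ((m:ℝ)+1) * (Real.Gamma ((m:ℝ)+1/4) * Real.Gamma ((m:ℝ)+3/4)) :=
      mul_le_mul_of_nonneg_left ih (by positivity)
    have step3 : (m:ℝ) * ((m:ℝ)+1) * (Real.Gamma ((m:ℝ)+1/4) * Real.Gamma ((m:ℝ)+3/4))
        ≤ ((m:ℝ)+1/4) * Real.Gamma ((m:ℝ)+1/4) * (((m:ℝ)+3/4) * Real.Gamma ((m:ℝ)+3/4)) := by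
      have h' : (m:ℝ) * ((m:ℝ)+1) ≤ ((m:ℝ)+1/4) * (((m:ℝ))+3/4) := by nlinarith
      nlinarith [mul_le_mul_of_nonneg_right h' (le_of_lt (mul_pos ga gc))]
    linarith [step1, step2, step3, step1 ▸ step2]

lemma uu_nonneg (R n : ℕ) (hn : R ≤ n) : 0 ≤ uu R n := by
  have h1 : (0:ℝ) < (n:ℝ) - R + 1 := by
    have : (R:ℝ) ≤ (n:ℝ) := by exact_mod_cast hn
    linarith
  have := Real.Gamma_pos_of_pos h1
  have := gamma_pos_nat_add n 1 (by norm_num)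
  unfold uu; positivity

lemma uu_diff (R n : ℕ) (hn : R + 1 ≤ n) :
    uu R n - uu R (n+1) = R * Real.Gamma ((n:ℝ) - R + 1) / (((n:ℝ)+1) * Real.Gamma ((n:ℝ)+1)) := by
  have hR : (R:ℝ) + 1 ≤ (n:ℝ) := by exact_mod_cast hn
  have hE : (0:ℝ) < (n:ℝ) - R + 1 := by linarith
  have hGE : Real.Gamma ((n:ℝ) - R + 1 + 1) = ((n:ℝ) - R + 1) * Real.Gamma ((n:ℝ) - R + 1) :=
    Real.Gamma_add_one (ne_of_gt hE)
  have hG2 : Real.Gamma (((n:ℝ)+1) + 1) = ((n:ℝ) + 1) * Real.Gamma ((n:ℝ) + 1) :=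
    Real.Gamma_add_one (by positivity)
  have g1 := gamma_pos_nat_add n 1 (by norm_num)
  unfold uu
  push_cast
  rw [show (n:ℝ) + 1 - (R:ℝ) + 1 = ((n:ℝ) - R + 1) + 1 by ring, hGE, hG2]
  field_simp
  ring

lemma abs_delta (R n : ℕ) (hn : R + 1 ≤ n) :
    |phi R (n+1) - phi R n|
      ≤ (bb R / (Real.Gamma (5/4) * Real.Gamma (7/4))) * (uu R n - uu R (n+1)) := by
  have hR : (R:ℝ) + 1 ≤ (n:ℝ) := by exact_mod_cast hn
  have hE : (0:ℝ) < (n:ℝ) - R + 1 := by linarith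
  have gE := Real.Gamma_pos_of_pos hE
  have g1 := gamma_pos_nat_add n 1 (by norm_num)
  have ga' : 0 < Real.Gamma (((n:ℝ)+1)+1/4) := Real.Gamma_pos_of_pos (by positivity)
  have gc' : 0 < Real.Gamma (((n:ℝ)+1)+3/4) := Real.Gamma_pos_of_pos (by positivity)
  have g5 : 0 < Real.Gamma (5/4) := Real.Gamma_pos_of_pos (by norm_num)
  have g7 : 0 < Real.Gamma (7/4) := Real.Gamma_pos_of_pos (by norm_num)
  rw [delta_phi R n hn, uu_diff R n hn, abs_neg]
  have habs : |(-1:ℝ)^R * R * bb R * Real.Gamma ((n:ℝ) - R + 1) * Real.Gamma ((n:ℝ)+1)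
      / (Real.Gamma (((n:ℝ)+1)+1/4) * Real.Gamma (((n:ℝ)+1)+3/4))|
      = (R:ℝ) * bb R * Real.Gamma ((n:ℝ) - R + 1) * Real.Gamma ((n:ℝ)+1)
      / (Real.Gamma (((n:ℝ)+1)+1/4) * Real.Gamma (((n:ℝ)+1)+3/4)) := by
    rw [abs_div, abs_mul, abs_mul, abs_mul, abs_mul, abs_pow, abs_neg, abs_one, one_pow,
      one_mul, abs_of_nonneg (by positivity : (0:ℝ) ≤ (R:ℝ)),
      abs_of_nonneg (le_of_lt (bb_pos R)), abs_of_nonneg (le_of_lt gE),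
      abs_of_nonneg (le_of_lt g1), abs_of_nonneg (le_of_lt (mul_pos ga' gc'))]
  rw [habs]
  -- key: Γ(5/4)Γ(7/4) Γ(n+1)Γ(n+2) ≤ Γ(n+5/4)Γ(n+7/4)
  have hmono := F1_le (n+1) (Nat.le_add_left 1 n)
  push_cast at hmono
  have hG2 : Real.Gamma (((n:ℝ)+1) + 1) = ((n:ℝ) + 1) * Real.Gamma ((n:ℝ) + 1) :=
    Real.Gamma_add_one (by positivity)
  rw [hG2] at hmono
  have hb := bb_pos R
  have hRHS : (bb R / (Real.Gamma (5/4) * Real.Gamma (7/4)))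
      * ((R:ℝ) * Real.Gamma ((n:ℝ) - R + 1) / (((n:ℝ)+1) * Real.Gamma ((n:ℝ)+1)))
      = (bb R * ((R:ℝ) * Real.Gamma ((n:ℝ) - R + 1)))
        / ((Real.Gamma (5/4) * Real.Gamma (7/4)) * (((n:ℝ)+1) * Real.Gamma ((n:ℝ)+1))) :=
    div_mul_div_comm _ _ _ _
  rw [hRHS, div_le_div_iff₀ (mul_pos ga' gc') (by positivity)]
  nlinarith [mul_le_mul_of_nonneg_left hmono
    (by positivity : (0:ℝ) ≤ (R:ℝ) * bb R * Real.Gamma ((n:ℝ) - R + 1))]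


lemma tendsto_phi (R : ℕ) (hR : 1 ≤ R) : Tendsto (phi R) atTop (nhds 0) := by
  have h := (tendsto_Sp_div R hR).mul tendsto_Q
  have h2 : Tendsto (fun N : ℕ => 1 - (Sp R N / Real.Gamma (N:ℝ)) * Q N) atTop (nhds 0) := by
    have := (tendsto_const_nhds (x := (1:ℝ)) (f := atTop (α := ℕ))).sub h
    simpa using this
  apply h2.congr'
  filter_upwards [eventually_ge_atTop 1] with N hN
  have hNpos : (0:ℝ) < (N:ℝ) := by
    have : (1:ℝ) ≤ (N:ℝ) := by exact_mod_cast hN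
    linarith
  have gN : 0 < Real.Gamma (N:ℝ) := Real.Gamma_pos_of_pos hNpos
  have ga := gamma_pos_nat_add N (1/4) (by norm_num)
  have gc := gamma_pos_nat_add N (3/4) (by norm_num)
  unfold phi Q
  congr 1
  field_simp

lemma phi_bound (R : ℕ) (hR : 1 ≤ R) (n : ℕ) (hn : R + 1 ≤ n) :
    |phi R n| ≤ (bb R / (Real.Gamma (5/4) * Real.Gamma (7/4))) * uu R n := by
  set c := bb R / (Real.Gamma (5/4) * Real.Gamma (7/4)) with hc
  have key : ∀ N : ℕ, n ≤ N → |phi R n| - c * uu R n ≤ |phi R N| := by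
    intro N hN
    have tele : phi R n = phi R N - ∑ m ∈ Finset.Ico n N, (phi R (m+1) - phi R m) := by
      rw [Finset.sum_Ico_eq_sub _ hN, Finset.sum_range_sub (fun i => phi R i),
        Finset.sum_range_sub (fun i => phi R i)]
      ring
    have hsum : |∑ m ∈ Finset.Ico n N, (phi R (m+1) - phi R m)|
        ≤ ∑ m ∈ Finset.Ico n N, (c * (uu R m - uu R (m+1))) := by
      refine (Finset.abs_sum_le_sum_abs _ _).trans (Finset.sum_le_sum ?_)
      intro m hm
      have hm' : n ≤ m := (Finset.mem_Ico.mp hm).1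
      exact abs_delta R m (le_trans hn hm')
    have husum : ∑ m ∈ Finset.Ico n N, (c * (uu R m - uu R (m+1)))
        = c * (uu R n - uu R N) := by
      rw [← Finset.mul_sum]
      congr 1
      rw [Finset.sum_Ico_eq_sub _ hN, Finset.sum_range_sub' (fun i => uu R i),
        Finset.sum_range_sub' (fun i => uu R i)]
      ring
    have hcnn : 0 ≤ c := by
      have g5 : 0 < Real.Gamma (5/4) := Real.Gamma_pos_of_pos (by norm_num)
      have g7 : 0 < Real.Gamma (7/4) := Real.Gamma_pos_of_pos (by norm_num)
      have := bb_pos R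
      positivity
    have huN : 0 ≤ uu R N := uu_nonneg R N (le_trans (le_trans (Nat.le_succ R) hn) hN)
    have h1 : |phi R n| ≤ |phi R N| + c * (uu R n - uu R N) := by
      rw [tele]
      calc |phi R N - ∑ m ∈ Finset.Ico n N, (phi R (m+1) - phi R m)|
          ≤ |phi R N| + |∑ m ∈ Finset.Ico n N, (phi R (m+1) - phi R m)| := abs_sub _ _
        _ ≤ |phi R N| + c * (uu R n - uu R N) := by rw [← husum]; gcongr
    nlinarith [mul_nonneg hcnn huN]
  have hlim : Tendsto (fun N : ℕ => |phi R N|) atTop (nhds 0) := by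
    have := (tendsto_phi R hR).abs
    simpa using this
  have : |phi R n| - c * uu R n ≤ 0 := by
    refine ge_of_tendsto hlim ?_
    filter_upwards [eventually_ge_atTop n] with N hN using key N hN
  linarith

/-- Main quantitative estimate. -/
lemma main_bound (R : ℕ) : ∃ C : ℝ, ∀ n : ℕ, R + 1 ≤ n →
    |Real.Gamma ((n:ℝ)+1/4) * Real.Gamma ((n:ℝ)+3/4) / Real.Gamma ((n:ℝ)+1) - Sp R n|
      ≤ C * Real.Gamma ((n:ℝ) - R) := by
  rcases Nat.eq_zero_or_pos R with rfl | hR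
  · refine ⟨1, fun n hn => ?_⟩
    have hnpos : (0:ℝ) < (n:ℝ) := by
      have : (1:ℝ) ≤ (n:ℝ) := by exact_mod_cast hn
      linarith
    have gn : 0 < Real.Gamma (n:ℝ) := Real.Gamma_pos_of_pos hnpos
    have g1 := gamma_pos_nat_add n 1 (by norm_num)
    have ga := gamma_pos_nat_add n (1/4) (by norm_num)
    have gc := gamma_pos_nat_add n (3/4) (by norm_num)
    have hSp : Sp 0 n = 0 := by simp [Sp]
    rw [hSp, sub_zero, show (n:ℝ) - ((0:ℕ):ℝ) = (n:ℝ) by push_cast; ring, one_mul,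
      abs_of_nonneg (by positivity)]
    rw [div_le_iff₀ g1]
    exact F_le_one hnpos
  · refine ⟨bb R / (Real.Gamma (5/4) * Real.Gamma (7/4)), fun n hn => ?_⟩
    have hRn : (R:ℝ) + 1 ≤ (n:ℝ) := by exact_mod_cast hn
    have hnpos : (0:ℝ) < (n:ℝ) := by linarith [(Nat.cast_nonneg R : (0:ℝ) ≤ (R:ℝ))]
    have gn : 0 < Real.Gamma (n:ℝ) := Real.Gamma_pos_of_pos hnpos
    have g1 := gamma_pos_nat_add n 1 (by norm_num)
    have ga := gamma_pos_nat_add n (1/4) (by norm_num)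
    have gc := gamma_pos_nat_add n (3/4) (by norm_num)
    have gE : 0 < Real.Gamma ((n:ℝ) - R) := Real.Gamma_pos_of_pos (by linarith)
    have gE1 : Real.Gamma ((n:ℝ) - R + 1) = ((n:ℝ) - R) * Real.Gamma ((n:ℝ) - R) :=
      Real.Gamma_add_one (by linarith)
    have hGn1 : Real.Gamma ((n:ℝ) + 1) = (n:ℝ) * Real.Gamma (n:ℝ) :=
      Real.Gamma_add_one (ne_of_gt hnpos)
    set c := bb R / (Real.Gamma (5/4) * Real.Gamma (7/4)) with hc
    have hcnn : 0 ≤ c := by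
      have g5 : 0 < Real.Gamma (5/4) := Real.Gamma_pos_of_pos (by norm_num)
      have g7 : 0 < Real.Gamma (7/4) := Real.Gamma_pos_of_pos (by norm_num)
      have := bb_pos R
      positivity
    have hid : Real.Gamma ((n:ℝ)+1/4) * Real.Gamma ((n:ℝ)+3/4) / Real.Gamma ((n:ℝ)+1) - Sp R n
        = (Real.Gamma ((n:ℝ)+1/4) * Real.Gamma ((n:ℝ)+3/4) / Real.Gamma ((n:ℝ)+1)) * phi R n := by
      unfold phi
      field_simp
    rw [hid, abs_mul, abs_of_nonneg (by positivity :
      (0:ℝ) ≤ Real.Gamma ((n:ℝ)+1/4) * Real.Gamma ((n:ℝ)+3/4) / Real.Gamma ((n:ℝ)+1))]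
    have hb1 := phi_bound R hR n hn
    have hstep1 : Real.Gamma ((n:ℝ)+1/4) * Real.Gamma ((n:ℝ)+3/4) / Real.Gamma ((n:ℝ)+1) * |phi R n|
        ≤ Real.Gamma ((n:ℝ)+1/4) * Real.Gamma ((n:ℝ)+3/4) / Real.Gamma ((n:ℝ)+1) * (c * uu R n) :=
      mul_le_mul_of_nonneg_left hb1 (by positivity)
    refine hstep1.trans ?_
    have hF : Real.Gamma ((n:ℝ)+1/4) * Real.Gamma ((n:ℝ)+3/4) / Real.Gamma ((n:ℝ)+1)
        ≤ Real.Gamma (n:ℝ) := by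
      rw [div_le_iff₀ g1]
      exact F_le_one hnpos
    have huupos : 0 ≤ uu R n := uu_nonneg R n (le_trans (Nat.le_succ R) hn)
    calc Real.Gamma ((n:ℝ)+1/4) * Real.Gamma ((n:ℝ)+3/4) / Real.Gamma ((n:ℝ)+1) * (c * uu R n)
        ≤ Real.Gamma (n:ℝ) * (c * uu R n) :=
          mul_le_mul_of_nonneg_right hF (by positivity)
      _ = c * (Real.Gamma (n:ℝ) * uu R n) := by ring
      _ ≤ c * Real.Gamma ((n:ℝ) - R) := ?_
    apply mul_le_mul_of_nonneg_left _ hcnn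
    have : Real.Gamma (n:ℝ) * uu R n = ((n:ℝ) - R) / (n:ℝ) * Real.Gamma ((n:ℝ) - R) := by
      unfold uu
      rw [gE1, hGn1]
      field_simp
    rw [this]
    have hfrac : ((n:ℝ) - R) / (n:ℝ) ≤ 1 := by
      rw [div_le_one hnpos]
      linarith [(Nat.cast_nonneg R : (0:ℝ) ≤ (R:ℝ))]
    nlinarith [gE, hfrac]


end Stmt8Aux

open Stmt8Aux Filter Finset in
/-- For every `R`,
`c_n - (1/(√2·π)) Σ_{k<R} (-1)^k c_k (2/3)^{n-k} Γ(n-k) = O((2/3)^n Γ(n-R))` as `n → ∞`. -/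
theorem stmt8 (R : ℕ) :
    (fun n : ℕ => cphi4 n - 1 / (Real.sqrt 2 * Real.pi) *
        ∑ k ∈ Finset.range R,
          (-1 : ℝ) ^ k * cphi4 k * (2 / 3 : ℝ) ^ ((n : ℤ) - (k : ℤ)) *
            Real.Gamma ((n : ℝ) - (k : ℝ)))
      =O[Filter.atTop] fun n : ℕ => (2 / 3 : ℝ) ^ n * Real.Gamma ((n : ℝ) - (R : ℝ)) := by
  obtain ⟨C, hC⟩ := main_bound R
  rw [Asymptotics.isBigO_iff]
  refine ⟨C / (Real.sqrt 2 * Real.pi), ?_⟩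
  filter_upwards [eventually_ge_atTop (R+1)] with n hn
  have hn1 : 1 ≤ n := le_trans (Nat.le_add_left 1 R) hn
  have hRn : (R:ℝ) + 1 ≤ (n:ℝ) := by exact_mod_cast hn
  have hsqpi : (0:ℝ) < Real.sqrt 2 * Real.pi := by positivity
  have gE : 0 < Real.Gamma ((n:ℝ) - R) := Real.Gamma_pos_of_pos (by linarith)
  have g1 : 0 < Real.Gamma ((n:ℝ)+1) := gamma_pos_nat_add n 1 (by norm_num)
  have hpow : (2/3:ℝ)^n * (3/2:ℝ)^n = 1 := by
    rw [← mul_pow]; norm_num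
  have hkey := key n hn1
  have hc4 : (2/3:ℝ)^n * (Real.Gamma ((n:ℝ)+1/4) * Real.Gamma ((n:ℝ)+3/4) / Real.Gamma ((n:ℝ)+1))
      = Real.sqrt 2 * Real.pi * cphi4 n := by
    rw [hkey]
    field_simp
    linear_combination cphi4 n * hpow
  have hsum : ∑ k ∈ Finset.range R,
        (-1:ℝ)^k * cphi4 k * (2/3:ℝ)^((n:ℤ)-(k:ℤ)) * Real.Gamma ((n:ℝ)-(k:ℝ))
      = (2/3:ℝ)^n * Sp R n := by
    rw [Sp, Finset.mul_sum]
    refine Finset.sum_congr rfl (fun k hk => ?_)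
    have hz : (2/3:ℝ)^((n:ℤ)-(k:ℤ)) = (2/3:ℝ)^n * (3/2:ℝ)^k := by
      rw [zpow_sub₀ (by norm_num : (2/3:ℝ) ≠ 0), zpow_natCast, zpow_natCast,
        div_eq_mul_inv, ← inv_pow]
      norm_num
    rw [hz]
    simp only [bb]
    ring
  have hmain : cphi4 n - 1 / (Real.sqrt 2 * Real.pi) *
        ∑ k ∈ Finset.range R,
          (-1:ℝ)^k * cphi4 k * (2/3:ℝ)^((n:ℤ)-(k:ℤ)) * Real.Gamma ((n:ℝ)-(k:ℝ))
      = (2/3:ℝ)^n * (Real.Gamma ((n:ℝ)+1/4) * Real.Gamma ((n:ℝ)+3/4) / Real.Gamma ((n:ℝ)+1)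
          - Sp R n) / (Real.sqrt 2 * Real.pi) := by
    rw [hsum, mul_sub, hc4]
    have hS : (Real.sqrt 2 * Real.pi) ≠ 0 := ne_of_gt hsqpi
    field_simp
  rw [hmain]
  have hbound := hC n hn
  have habs1 : ‖(2/3:ℝ)^n * (Real.Gamma ((n:ℝ)+1/4) * Real.Gamma ((n:ℝ)+3/4) / Real.Gamma ((n:ℝ)+1)
        - Sp R n) / (Real.sqrt 2 * Real.pi)‖
      = (2/3:ℝ)^n * |Real.Gamma ((n:ℝ)+1/4) * Real.Gamma ((n:ℝ)+3/4) / Real.Gamma ((n:ℝ)+1)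
        - Sp R n| / (Real.sqrt 2 * Real.pi) := by
    rw [Real.norm_eq_abs, abs_div, abs_mul, abs_of_nonneg (le_of_lt hsqpi),
      abs_of_nonneg (by positivity : (0:ℝ) ≤ (2/3:ℝ)^n)]
  rw [habs1]
  have habs2 : ‖(2/3:ℝ)^n * Real.Gamma ((n:ℝ) - R)‖ = (2/3:ℝ)^n * Real.Gamma ((n:ℝ) - R) := by
    rw [Real.norm_eq_abs, abs_of_nonneg (by positivity)]
  rw [habs2]
  have hshape : C / (Real.sqrt 2 * Real.pi) * ((2/3:ℝ)^n * Real.Gamma ((n:ℝ) - R))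
      = (2/3:ℝ)^n * (C * Real.Gamma ((n:ℝ) - R)) / (Real.sqrt 2 * Real.pi) := by ring
  rw [hshape]
  have h23 : (0:ℝ) ≤ (2/3:ℝ)^n := by positivity
  exact (div_le_div_iff_of_pos_right hsqpi).mpr (mul_le_mul_of_nonneg_left hbound h23)
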